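/- Let V(y) = Σ_{k=−m}^{M} a_k y^k be a Laurent polynomial with real coefficients a_k ≥ 0, where m ≥ 1, M ≥ 1, a_{−m} > 0 and a_M > 0. Let τ > 0 be the unique positive real number with V′(τ) = 0 and set ρ = 1/V(τ). Then for every real t with 0 < t < ρ, the polynomial P_t(y) = y^m − t·y^m·V(y) ∈ ℝ[y] (of degree m + M) has no root of modulus τ, and it has exactly m roots in ℂ, counted with multiplicity, of modulus strictly less than τ. -/

import Mathlib

open Polynomial Complex Metric Real

/-- FTC on the circle: if `f` has a primitive on (a neighborhood of each point of) the
circle, its circle integral vanishes. -/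
lemma circleIntegral_eq_zero_of_primitive {r : ℝ} (hr : 0 < r) {F f : ℂ → ℂ}
    (hF : ∀ z ∈ sphere (0:ℂ) r, HasDerivAt F (f z) z)
    (hf : ContinuousOn f (sphere (0:ℂ) r)) :
    (∮ z in C(0, r), f z) = 0 := by
  have hmem : ∀ θ : ℝ, circleMap 0 r θ ∈ sphere (0:ℂ) r := fun θ =>
    circleMap_mem_sphere 0 hr.le θ
  have key : ∀ θ ∈ Set.uIcc (0:ℝ) (2*π),
      HasDerivAt (F ∘ circleMap 0 r)
        (deriv (circleMap 0 r) θ • f (circleMap 0 r θ)) θ := by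
    intro θ _
    have h1 : HasDerivAt (circleMap 0 r) (deriv (circleMap 0 r) θ) θ := by
      simpa using (hasDerivAt_circleMap 0 r θ)
    have h2 := (hF _ (hmem θ)).comp θ h1
    simpa [mul_comm] using h2
  have hcont : ContinuousOn (fun θ : ℝ => deriv (circleMap 0 r) θ • f (circleMap 0 r θ))
      (Set.uIcc (0:ℝ) (2*π)) := by
    simp only [deriv_circleMap]
    exact (((continuous_circleMap 0 r).mul continuous_const).continuousOn).smul
      (hf.comp (continuous_circleMap 0 r).continuousOn (fun θ _ => hmem θ))
  have := intervalIntegral.integral_eq_sub_of_hasDerivAt key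
    (hcont.intervalIntegrable)
  rw [circleIntegral, this]
  simp [Function.comp, periodic_circleMap 0 r 0 |>.symm]

lemma circleIntegral_sub_inv_of_abs_gt {r : ℝ} (hr : 0 < r) {a : ℂ} (ha : r < ‖a‖) :
    (∮ z in C(0, r), (z - a)⁻¹) = 0 := by
  have ha0 : a ≠ 0 := by
    intro h; rw [h] at ha; simp at ha; linarith
  apply circleIntegral_eq_zero_of_primitive hr (F := fun z => Complex.log ((z - a) / (-a)))
  · intro z hz
    have hzabs : ‖z‖ = r := by simpa using hz
    have hslit : (z - a) / (-a) ∈ Complex.slitPlane := by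
      have h1 : (z - a) / (-a) = 1 + (-z / a) := by
        rw [div_neg, neg_div, sub_div, div_self ha0]; ring
      rw [h1]
      apply Complex.mem_slitPlane_of_norm_lt_one
      simp only [norm_div, norm_neg]
      rw [hzabs, div_lt_one (lt_trans hr ha)]
      exact ha
    have hne : z - a ≠ 0 := by
      intro h
      have : z = a := by linear_combination h
      rw [this] at hzabs; rw [hzabs] at ha; linarith
    have hdiv : HasDerivAt (fun w : ℂ => (w - a) / (-a)) ((-a)⁻¹) z := by
      simpa using (((hasDerivAt_id z).sub_const a).div_const (-a))
    have hlog : HasDerivAt Complex.log (((z - a) / (-a))⁻¹) ((z - a) / (-a)) :=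
      Complex.hasDerivAt_log hslit
    have := hlog.comp z hdiv
    refine this.congr_deriv ?_
    field_simp
  · apply ContinuousOn.inv₀
    · exact (continuous_id.sub continuous_const).continuousOn
    · intro z hz
      have hzabs : ‖z‖ = r := by simpa using hz
      intro h
      have : z = a := by linear_combination h
      rw [this] at hzabs; rw [hzabs] at ha; linarith

lemma my_circleIntegral_add {f g : ℂ → ℂ} {c : ℂ} {R : ℝ} (hf : CircleIntegrable f c R)
    (hg : CircleIntegrable g c R) :
    (∮ z in C(c, R), (f z + g z)) = (∮ z in C(c, R), f z) + ∮ z in C(c, R), g z := by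
  simp only [circleIntegral, smul_add, intervalIntegral.integral_add hf.out hg.out]

lemma eval_prod_ne_zero {r : ℝ} (c : ℂ) (hc : c ≠ 0) (s : Multiset ℂ)
    (hs : ∀ a ∈ s, ‖a‖ ≠ r) (z : ℂ) (hz : ‖z‖ = r) :
    Polynomial.eval z (Polynomial.C c * (s.map (fun a => Polynomial.X - Polynomial.C a)).prod) ≠ 0 := by
  rw [Polynomial.eval_mul, Polynomial.eval_C, Polynomial.eval_multiset_prod]
  refine mul_ne_zero hc (Multiset.prod_ne_zero ?_)
  simp only [Multiset.map_map, Multiset.mem_map, Function.comp]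
  rintro ⟨a, has, hev⟩
  simp only [Polynomial.eval_sub, Polynomial.eval_X, Polynomial.eval_C] at hev
  have : z = a := by linear_combination hev
  exact hs a has (by rw [← this, hz])

lemma count_roots_integral {r : ℝ} (hr : 0 < r) (c : ℂ) (hc : c ≠ 0) (s : Multiset ℂ)
    (hs : ∀ a ∈ s, ‖a‖ ≠ r) :
    (∮ z in C(0, r),
        (Polynomial.eval z (Polynomial.derivative
            (Polynomial.C c * (s.map (fun a => Polynomial.X - Polynomial.C a)).prod))) /
        (Polynomial.eval z (Polynomial.C c * (s.map (fun a => Polynomial.X - Polynomial.C a)).prod)))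
      = 2 * Real.pi * Complex.I *
          (Multiset.card (s.filter (fun a => ‖a‖ < r)) : ℂ) := by
  classical
  induction s using Multiset.induction_on with
  | empty =>
    simp only [Multiset.map_zero, Multiset.prod_zero, mul_one, Polynomial.derivative_C,
      Polynomial.eval_zero, zero_div, Multiset.filter_zero, Multiset.card_zero,
      Nat.cast_zero, mul_zero]
    simp [circleIntegral]
  | cons a s ih =>
    have hs' : ∀ b ∈ s, ‖b‖ ≠ r := fun b hb => hs b (Multiset.mem_cons_of_mem hb)
    have ha : ‖a‖ ≠ r := hs a (Multiset.mem_cons_self a s)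
    set q : Polynomial ℂ := Polynomial.C c * (s.map (fun a => Polynomial.X - Polynomial.C a)).prod with hq
    have hfact : Polynomial.C c * ((a ::ₘ s).map (fun a => Polynomial.X - Polynomial.C a)).prod
        = (Polynomial.X - Polynomial.C a) * q := by
      rw [hq, Multiset.map_cons, Multiset.prod_cons]; ring
    rw [hfact]
    -- pointwise identity on the sphere
    have hEq : Set.EqOn
        (fun z => (Polynomial.eval z (Polynomial.derivative ((Polynomial.X - Polynomial.C a) * q))) /
          (Polynomial.eval z ((Polynomial.X - Polynomial.C a) * q)))
        (fun z => (z - a)⁻¹ + (Polynomial.eval z (Polynomial.derivative q)) / (Polynomial.eval z q))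
        (Metric.sphere (0:ℂ) r) := by
      intro z hz
      have hzabs : ‖z‖ = r := by simpa using hz
      have hqz : Polynomial.eval z q ≠ 0 := eval_prod_ne_zero c hc s hs' z hzabs
      have hza : z - a ≠ 0 := by
        intro h
        exact ha (by rw [← sub_eq_zero.mp h, hzabs])
      simp only [Polynomial.derivative_mul, Polynomial.derivative_sub,
        Polynomial.derivative_X, Polynomial.derivative_C, sub_zero, one_mul,
        Polynomial.eval_add, Polynomial.eval_mul, Polynomial.eval_sub,
        Polynomial.eval_X, Polynomial.eval_C]
      field_simp
    rw [circleIntegral.integral_congr hr.le hEq]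
    have hint1 : CircleIntegrable (fun z => (z - a)⁻¹) 0 r := by
      apply ContinuousOn.circleIntegrable hr.le
      apply ContinuousOn.inv₀ (continuous_sub_right a).continuousOn
      intro z hz h
      have hzabs : ‖z‖ = r := by simpa using hz
      exact ha (by rw [← sub_eq_zero.mp h, hzabs])
    have hint2 : CircleIntegrable
        (fun z => (Polynomial.eval z (Polynomial.derivative q)) / (Polynomial.eval z q)) 0 r := by
      apply ContinuousOn.circleIntegrable hr.le
      apply ContinuousOn.div
      · exact (Polynomial.continuous _).continuousOn
      · exact (Polynomial.continuous _).continuousOn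
      · intro z hz
        have hzabs : ‖z‖ = r := by simpa using hz
        exact eval_prod_ne_zero c hc s hs' z hzabs
    rw [my_circleIntegral_add hint1 hint2, ih hs']
    have hinv : (∮ z in C(0, r), (z - a)⁻¹)
        = if ‖a‖ < r then (2 * Real.pi * Complex.I) else 0 := by
      split_ifs with h
      · exact circleIntegral.integral_sub_inv_of_mem_ball (by simpa using h)
      · exact circleIntegral_sub_inv_of_abs_gt hr (lt_of_le_of_ne (not_lt.mp h) (Ne.symm ha))
    rw [hinv, Multiset.filter_cons]
    split_ifs with h <;> simp <;> ring

lemma rouche_integral {r : ℝ} (hr : 0 < r) (p : Polynomial ℂ) (cm : ℂ) (hcm : cm ≠ 0) (m : ℕ) (hm : 1 ≤ m)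
    (hdom : ∀ z : ℂ, ‖z‖ = r →
      ‖p.eval z - cm * z ^ m‖ < ‖cm‖ * r ^ m) :
    (∮ z in C(0, r), (Polynomial.eval z (Polynomial.derivative p)) / (Polynomial.eval z p))
      = 2 * Real.pi * Complex.I * m := by
  have hpz : ∀ z : ℂ, ‖z‖ = r → Polynomial.eval z p ≠ 0 := by
    intro z hz h
    have h1 := hdom z hz
    rw [h, zero_sub, norm_neg, norm_mul, norm_pow, hz] at h1
    exact lt_irrefl _ h1
  have hz0 : ∀ z : ℂ, ‖z‖ = r → z ≠ 0 := by
    intro z hz h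
    rw [h] at hz; simp at hz; linarith
  -- The function p'/p - m/z has primitive log (p z / (cm z^m)) on the circle.
  have hprim : ∀ z ∈ Metric.sphere (0:ℂ) r,
      HasDerivAt (fun w => Complex.log (Polynomial.eval w p / (cm * w ^ m)))
        ((Polynomial.eval z (Polynomial.derivative p)) / (Polynomial.eval z p) - m / z) z := by
    intro z hz
    have hzabs : ‖z‖ = r := by simpa using hz
    have hz' : z ≠ 0 := hz0 z hzabs
    have hpz' : Polynomial.eval z p ≠ 0 := hpz z hzabs
    have hgz : cm * z ^ m ≠ 0 := mul_ne_zero hcm (pow_ne_zero m hz')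
    have hslit : Polynomial.eval z p / (cm * z ^ m) ∈ Complex.slitPlane := by
      have h1 : Polynomial.eval z p / (cm * z ^ m)
          = 1 + (Polynomial.eval z p - cm * z ^ m) / (cm * z ^ m) := by
        field_simp
        ring
      rw [h1]
      apply Complex.mem_slitPlane_of_norm_lt_one
      simp only [norm_div, norm_mul, norm_pow, hzabs]
      rw [div_lt_one (mul_pos (norm_pos_iff.mpr hcm) (pow_pos hr m))]
      exact hdom z hzabs
    have hp : HasDerivAt (fun w => Polynomial.eval w p)
        (Polynomial.eval z (Polynomial.derivative p)) z := p.hasDerivAt z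
    have hg : HasDerivAt (fun w => cm * w ^ m) (cm * (m * z ^ (m - 1))) z := by
      simpa using ((hasDerivAt_pow m z).const_mul cm)
    have hh : HasDerivAt (fun w => Polynomial.eval w p / (cm * w ^ m))
        ((Polynomial.eval z (Polynomial.derivative p) * (cm * z ^ m)
          - Polynomial.eval z p * (cm * (m * z ^ (m - 1)))) / (cm * z ^ m) ^ 2) z :=
      hp.div hg hgz
    have hlog : HasDerivAt Complex.log ((Polynomial.eval z p / (cm * z ^ m))⁻¹)
        (Polynomial.eval z p / (cm * z ^ m)) := Complex.hasDerivAt_log hslit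
    have := hlog.comp z hh
    refine this.congr_deriv ?_
    obtain ⟨n, rfl⟩ : ∃ n, m = n + 1 := ⟨m - 1, by omega⟩
    simp only [Nat.add_sub_cancel]
    field_simp
    ring
  have hcont : ContinuousOn
      (fun z : ℂ => (Polynomial.eval z (Polynomial.derivative p)) / (Polynomial.eval z p)
        - (m : ℂ) / z) (Metric.sphere (0:ℂ) r) := by
    apply ContinuousOn.sub
    · apply ContinuousOn.div (Polynomial.continuous _).continuousOn
        (Polynomial.continuous _).continuousOn
      intro z hz
      exact hpz z (by simpa using hz)
    · apply ContinuousOn.div continuous_const.continuousOn continuous_id.continuousOn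
      intro z hz
      exact hz0 z (by simpa using hz)
  have h0 := circleIntegral_eq_zero_of_primitive hr hprim hcont
  have hEq : Set.EqOn
      (fun z : ℂ => (Polynomial.eval z (Polynomial.derivative p)) / (Polynomial.eval z p))
      (fun z : ℂ => ((Polynomial.eval z (Polynomial.derivative p)) / (Polynomial.eval z p)
          - (m : ℂ) / z) + (m : ℂ) • (z - 0)⁻¹)
      (Metric.sphere (0:ℂ) r) := by
    intro z hz
    simp only [sub_zero, smul_eq_mul, ← div_eq_mul_inv]
    ring
  have hint2 : CircleIntegrable (fun z : ℂ => (m : ℂ) • (z - 0)⁻¹) 0 r := by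
    apply ContinuousOn.circleIntegrable hr.le
    apply ContinuousOn.smul (f := fun _ : ℂ => (m : ℂ)) (g := fun z : ℂ => (z - 0)⁻¹) continuous_const.continuousOn
    apply ContinuousOn.inv₀ (continuous_sub_right (0:ℂ)).continuousOn
    intro z hz h
    rw [sub_eq_zero] at h
    exact hz0 z (by simpa using hz) h
  rw [circleIntegral.integral_congr hr.le hEq,
    my_circleIntegral_add (hcont.circleIntegrable hr.le) hint2, h0, zero_add,
    circleIntegral.integral_smul,
    circleIntegral.integral_sub_inv_of_mem_ball (by simpa using hr)]
  simp [smul_eq_mul]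
  ring

open Polynomial in
/-- Let `V(y) = Σ_{k=−m}^{M} a_k y^k` be a Laurent polynomial with nonnegative real
coefficients, `m, M ≥ 1`, `a_{−m} > 0`, `a_M > 0`, critical point `τ > 0` with
`V′(τ) = 0`, and `ρ = 1/V(τ)`. Then for every `0 < t < ρ` the polynomial
`P_t(y) = y^m − t·y^m·V(y)` has no complex root of modulus `τ`, and it has exactly `m`
complex roots (with multiplicity) of modulus strictly less than `τ`. -/
theorem small_branches_count (m M : ℕ) (hm : 1 ≤ m) (hM : 1 ≤ M) (a : ℤ → ℝ)
    (ha : ∀ k, 0 ≤ a k) (ham : 0 < a (-(m : ℤ))) (haM : 0 < a (M : ℤ))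
    (V : ℝ → ℝ) (hV : V = fun y => ∑ k ∈ Finset.Icc (-(m : ℤ)) (M : ℤ), a k * y ^ k)
    (τ : ℝ) (hτ : 0 < τ) (hcrit : deriv V τ = 0)
    (ρ : ℝ) (hρ : ρ = 1 / V τ) :
    ∀ t : ℝ, 0 < t → t < ρ →
      ∀ Pt : ℝ[X],
        Pt = X ^ m - C t *
            (∑ k ∈ Finset.Icc (-(m : ℤ)) (M : ℤ), C (a k) * X ^ (k + (m : ℤ)).toNat) →
        (∀ z : ℂ, ‖z‖ = τ → Polynomial.aeval z Pt ≠ 0) ∧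
        Multiset.card
          ((Pt.map (algebraMap ℝ ℂ)).roots.filter fun z => ‖z‖ < τ) = m := by
  classical
  intro t ht htρ Pt hPt
  set S : Finset ℤ := Finset.Icc (-(m : ℤ)) (M : ℤ) with hS
  have h0S : (0 : ℤ) ∈ S := by
    simp only [hS, Finset.mem_Icc]
    constructor <;> omega
  have hMS : (M : ℤ) ∈ S := by
    simp only [hS, Finset.mem_Icc]
    constructor <;> omega
  have hterm : ∀ k ∈ S, 0 ≤ a k * τ ^ k := by
    intro k _
    exact mul_nonneg (ha k) (zpow_nonneg hτ.le k)
  have hVτ : V τ = ∑ k ∈ S, a k * τ ^ k := by rw [hV]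
  have hVpos : 0 < V τ := by
    rw [hVτ]
    calc (0:ℝ) < a M * τ ^ (M:ℤ) := mul_pos haM (zpow_pos hτ (M:ℤ))
    _ ≤ _ := Finset.single_le_sum hterm hMS
  have htV : t * V τ < 1 := by
    rw [hρ, lt_div_iff₀ hVpos] at htρ
    linarith
  have ha0 : a 0 ≤ V τ := by
    rw [hVτ]
    calc a 0 = a 0 * τ ^ (0:ℤ) := by simp
    _ ≤ _ := Finset.single_le_sum hterm h0S
  have hcm : 0 < 1 - t * a 0 := by
    have : t * a 0 ≤ t * V τ := mul_le_mul_of_nonneg_left ha0 ht.le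
    linarith
  -- toNat exponent facts
  have hexp : ∀ k ∈ S, ((k + (m:ℤ)).toNat : ℤ) = k + m := by
    intro k hk
    simp only [hS, Finset.mem_Icc] at hk
    omega
  have hτexp : ∀ k ∈ S, τ ^ ((k + (m:ℤ)).toNat) = τ ^ m * τ ^ k := by
    intro k hk
    have h1 : (τ : ℝ) ^ ((k + (m:ℤ)).toNat) = τ ^ (((k + (m:ℤ)).toNat : ℤ)) := by
      rw [zpow_natCast]
    rw [h1, hexp k hk, zpow_add₀ hτ.ne', zpow_natCast, mul_comm]
  -- evaluation of p over ℂ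
  set p : Polynomial ℂ := Pt.map (algebraMap ℝ ℂ) with hp
  have heval : ∀ z : ℂ, Polynomial.eval z p
      = z ^ m - (t : ℂ) * ∑ k ∈ S, (a k : ℂ) * z ^ ((k + (m:ℤ)).toNat) := by
    intro z
    rw [hp, Polynomial.eval_map, ← Polynomial.aeval_def, hPt]
    simp [Finset.mul_sum]
  set cm : ℂ := ((1 - t * a 0 : ℝ) : ℂ) with hcmdef
  have hcm0 : cm ≠ 0 := by
    simp only [hcmdef, Ne, Complex.ofReal_eq_zero]
    linarith
  have habscm : ‖cm‖ = 1 - t * a 0 := by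
    rw [hcmdef, Complex.norm_real, Real.norm_of_nonneg hcm.le]
  -- the domination estimate
  have hdom : ∀ z : ℂ, ‖z‖ = τ →
      ‖Polynomial.eval z p - cm * z ^ m‖ < ‖cm‖ * τ ^ m := by
    intro z hz
    have hzm : ‖z‖ ^ m = τ ^ m := by rw [hz]
    have hdiff : Polynomial.eval z p - cm * z ^ m
        = -(t : ℂ) * ∑ k ∈ S.erase 0, (a k : ℂ) * z ^ ((k + (m:ℤ)).toNat) := by
      rw [heval z, ← Finset.add_sum_erase S _ h0S]
      simp only [zero_add, Int.toNat_natCast]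
      push_cast [hcmdef]
      ring
    rw [hdiff]
    have hbound : ‖∑ k ∈ S.erase 0, (a k : ℂ) * z ^ ((k + (m:ℤ)).toNat)‖
        ≤ ∑ k ∈ S.erase 0, a k * τ ^ ((k + (m:ℤ)).toNat) := by
      refine le_trans (norm_sum_le _ _) (le_of_eq ?_)
      refine Finset.sum_congr rfl fun k _ => ?_
      rw [norm_mul, norm_pow, hz, Complex.norm_real, Real.norm_of_nonneg (ha k)]
    have hsum : ∑ k ∈ S, a k * τ ^ ((k + (m:ℤ)).toNat) = τ ^ m * V τ := by
      rw [hVτ, Finset.mul_sum]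
      refine Finset.sum_congr rfl fun k hk => ?_
      rw [hτexp k hk]; ring
    have hsum' : ∑ k ∈ S.erase 0, a k * τ ^ ((k + (m:ℤ)).toNat) = τ ^ m * V τ - a 0 * τ ^ m := by
      have h2 := Finset.add_sum_erase S (fun k => a k * τ ^ ((k + (m:ℤ)).toNat)) h0S
      simp only [zero_add, Int.toNat_natCast] at h2
      rw [hsum] at h2
      linarith
    rw [norm_mul, norm_neg, Complex.norm_real, Real.norm_of_nonneg ht.le, habscm]
    calc t * ‖∑ k ∈ S.erase 0, (a k : ℂ) * z ^ ((k + (m:ℤ)).toNat)‖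
        ≤ t * (τ ^ m * V τ - a 0 * τ ^ m) := by
          rw [← hsum']
          exact mul_le_mul_of_nonneg_left hbound ht.le
      _ < (1 - t * a 0) * τ ^ m := by nlinarith [pow_pos hτ m]
  -- nonvanishing on the circle
  have hne : ∀ z : ℂ, ‖z‖ = τ → Polynomial.eval z p ≠ 0 := by
    intro z hz h
    have h1 := hdom z hz
    rw [h, zero_sub, norm_neg, norm_mul, norm_pow, hz] at h1
    exact lt_irrefl _ h1
  have part1 : ∀ z : ℂ, ‖z‖ = τ → Polynomial.aeval z Pt ≠ 0 := by
    intro z hz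
    have := hne z hz
    rwa [hp, Polynomial.eval_map, ← Polynomial.aeval_def] at this
  refine ⟨part1, ?_⟩
  -- p is nonzero
  have hp0 : p ≠ 0 := by
    intro h
    apply hne (τ : ℂ) (by rw [Complex.norm_real, Real.norm_of_nonneg hτ.le])
    rw [h, Polynomial.eval_zero]
  have hsplits : Polynomial.Splits p := IsAlgClosed.splits p
  have hfact := Polynomial.Splits.eq_prod_roots hsplits
  have hlc : p.leadingCoeff ≠ 0 := Polynomial.leadingCoeff_ne_zero.mpr hp0
  have hroots : ∀ z ∈ p.roots, ‖z‖ ≠ τ := by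
    intro z hz h
    exact hne z h ((Polynomial.mem_roots hp0).mp hz)
  have hcount := count_roots_integral hτ p.leadingCoeff hlc p.roots hroots
  have hrou := rouche_integral hτ p cm hcm0 m hm hdom
  rw [← hfact] at hcount
  rw [hcount] at hrou
  have h2πI : (2 * Real.pi * Complex.I) ≠ 0 := by
    simp [Real.pi_ne_zero, Complex.I_ne_zero]
  have := mul_left_cancel₀ h2πI hrou
  exact_mod_cast this
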